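/- Let P be a sum of μ distinct multilinear monomials in variables x₁,…,x_m, each of degree at most T, with T dividing m. For a uniformly random equipartition π of [m] into T parts, let P_π be the sum of those monomials of P whose variable index sets are shattered by π. Then with probability at least exp(−2T), the number of monomials in P_π is at least 0.5·μ·exp(−T). -/

import Mathlib

open Finset Function

lemma cast_descFactorial (n k : ℕ) (h : k ≤ n) :
    ((n.descFactorial k : ℝ)) = ∏ i ∈ Finset.range k, ((n:ℝ) - i) := by
  rw [Nat.descFactorial_eq_prod_range, Nat.cast_prod]
  exact Finset.prod_congr rfl fun i hi => by
    rw [Nat.cast_sub ((Finset.mem_range.mp hi).le.trans h)]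

lemma exp_le_prod (T k : ℕ) (hT : 1 ≤ T) (hk : k ≤ T) :
    Real.exp (-(T:ℝ)) ≤ ∏ i ∈ Finset.range k, (((T:ℝ) - i)/T) := by
  have hT0 : (0:ℝ) < T := by exact_mod_cast hT
  have hnn : ∀ i ∈ Finset.range T, (0:ℝ) ≤ ((T:ℝ) - i)/T := by
    intro i hi
    have : (i:ℝ) ≤ T := by exact_mod_cast (Finset.mem_range.mp hi).le
    have : (0:ℝ) ≤ (T:ℝ) - i := by linarith
    positivity
  have step1 : Real.exp (-(T:ℝ)) ≤ ∏ i ∈ Finset.range T, (((T:ℝ) - i)/T) := by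
    have hprod : ∏ i ∈ Finset.range T, (((T:ℝ) - i)/T) = (T.factorial : ℝ) / (T:ℝ)^T := by
      rw [Finset.prod_div_distrib, Finset.prod_const, Finset.card_range,
        ← cast_descFactorial T T le_rfl, Nat.descFactorial_self]
    rw [hprod]
    have hsum : ((T:ℝ))^T / (T.factorial : ℝ) ≤ Real.exp T := by
      refine le_trans ?_ (Real.sum_le_exp_of_nonneg hT0.le (T+1))
      exact Finset.single_le_sum (f := fun i => (T:ℝ)^i / (i.factorial : ℝ))
        (fun i _ => by positivity) (Finset.self_mem_range_succ T)
    have hpos : (0:ℝ) < ((T:ℝ))^T / (T.factorial : ℝ) := by positivity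
    have := inv_anti₀ hpos hsum
    rw [Real.exp_neg]
    rwa [inv_div] at this
  refine step1.trans ?_
  rw [← Finset.prod_range_mul_prod_Ico _ hk]
  refine mul_le_of_le_one_right (Finset.prod_nonneg fun i hi => hnn i
    (Finset.mem_range.mpr ((Finset.mem_range.mp hi).trans_le hk))) ?_
  refine Finset.prod_le_one (fun i hi => hnn i (Finset.mem_range.mpr (Finset.mem_Ico.mp hi).2)) ?_
  intro i hi
  have : (0:ℝ) ≤ i := by positivity
  rw [div_le_one hT0]; linarith

lemma aux_exp_le (T s k : ℕ) (hT : 1 ≤ T) (hk : k ≤ T) (hs : k = 0 ∨ 1 ≤ s) :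
    Real.exp (-(T:ℝ)) * ((T*s).descFactorial k : ℝ) ≤ ((T.descFactorial k : ℝ)) * (s:ℝ)^k := by
  rcases hs with rfl | hs
  · simp only [Nat.descFactorial_zero, Nat.cast_one, pow_zero, mul_one, one_mul]
    calc Real.exp (-(T:ℝ)) ≤ Real.exp 0 := Real.exp_le_exp.mpr (by simp)
    _ = 1 := Real.exp_zero
  · have hT0 : (0:ℝ) < T := by exact_mod_cast hT
    have hkm : k ≤ T * s := hk.trans (Nat.le_mul_of_pos_right T hs)
    rw [cast_descFactorial _ _ hkm, cast_descFactorial _ _ hk]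
    have hnn2 : ∀ i ∈ Finset.range k, (0:ℝ) ≤ ((T*s : ℕ):ℝ) - i := by
      intro i hi
      have : (i:ℝ) ≤ ((T*s:ℕ):ℝ) := by exact_mod_cast ((Finset.mem_range.mp hi).le.trans hkm)
      linarith
    calc Real.exp (-(T:ℝ)) * ∏ i ∈ Finset.range k, (((T*s:ℕ):ℝ) - i)
        ≤ (∏ i ∈ Finset.range k, (((T:ℝ) - i)/T)) * ∏ i ∈ Finset.range k, (((T*s:ℕ):ℝ) - i) :=
          mul_le_mul_of_nonneg_right (exp_le_prod T k hT hk) (Finset.prod_nonneg hnn2)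
      _ = ∏ i ∈ Finset.range k, (((T:ℝ) - i)/T * (((T*s:ℕ):ℝ) - i)) := (Finset.prod_mul_distrib).symm
      _ ≤ ∏ i ∈ Finset.range k, (((T:ℝ) - i) * s) := by
          refine Finset.prod_le_prod (fun i hi => mul_nonneg ?_ (hnn2 i hi)) ?_
          · have : (i:ℝ) ≤ T := by exact_mod_cast ((Finset.mem_range.mp hi).le.trans hk)
            have : (0:ℝ) ≤ (T:ℝ) - i := by linarith
            positivity
          · intro i hi
            have h1 : (i:ℝ) ≤ T := by exact_mod_cast ((Finset.mem_range.mp hi).le.trans hk)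
            have h2 : (0:ℝ) ≤ (T:ℝ) - i := by linarith
            have h3 : (((T*s:ℕ)):ℝ) = (T:ℝ) * s := by push_cast; ring
            calc ((T:ℝ) - i)/T * (((T*s:ℕ):ℝ) - i) ≤ ((T:ℝ) - i)/T * ((T:ℝ)*s) := by
                  refine mul_le_mul_of_nonneg_left ?_ (by positivity)
                  rw [h3]; have : (0:ℝ) ≤ i := by positivity
                  linarith
              _ = ((T:ℝ) - i) * s := by field_simp
      _ = (∏ i ∈ Finset.range k, ((T:ℝ) - i)) * (s:ℝ)^k := by
          rw [Finset.prod_mul_distrib, Finset.prod_const, Finset.card_range]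

-- generic fiber-counting lemma
lemma fiber_count {α β : Type*} [Fintype α] [DecidableEq β]
    (Φ : α → β) (t : Finset β) (p : β → Prop) [DecidablePred p]
    (ht : ∀ a, Φ a ∈ t) (K : ℕ)
    (hK : ∀ b ∈ t, (Finset.univ.filter (fun a => Φ a = b)).card = K) :
    (Finset.univ.filter (fun a : α => p (Φ a))).card = (t.filter p).card * K := by
  rw [Finset.card_eq_sum_card_fiberwise
    (f := Φ) (t := t.filter p)
    (fun a ha => Finset.mem_filter.mpr ⟨ht a, (Finset.mem_filter.mp ha).2⟩)]
  have hcongr : ∀ b ∈ t.filter p,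
      ((Finset.univ.filter (fun a => p (Φ a))).filter (fun a => Φ a = b)).card = K := by
    intro b hb
    obtain ⟨hbt, hpb⟩ := Finset.mem_filter.mp hb
    rw [← hK b hbt]
    congr 1
    ext a
    simp only [Finset.mem_filter, Finset.mem_univ, true_and]
    exact ⟨fun h => h.2, fun h => ⟨h ▸ hpb, h⟩⟩
  rw [Finset.sum_congr rfl hcongr, Finset.sum_const, smul_eq_mul]

lemma comp_fiber_card {n : ℕ} {β : Type*} [DecidableEq β] (f₀ : Fin n → β)
    (σ₁ : Equiv.Perm (Fin n)) :
    (Finset.univ.filter (fun σ : Equiv.Perm (Fin n) => f₀ ∘ σ = f₀ ∘ σ₁)).card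
      = (Finset.univ.filter (fun σ : Equiv.Perm (Fin n) => f₀ ∘ σ = f₀)).card := by
  refine Finset.card_bij' (fun σ _ => σ₁.symm.trans σ) (fun σ _ => σ₁.trans σ) ?_ ?_ ?_ ?_
  · intro σ hσ
    have h := (Finset.mem_filter.mp hσ).2
    refine Finset.mem_filter.mpr ⟨Finset.mem_univ _, funext fun x => ?_⟩
    have := congrFun h (σ₁.symm x)
    simpa using this
  · intro σ hσ
    have h := (Finset.mem_filter.mp hσ).2
    refine Finset.mem_filter.mpr ⟨Finset.mem_univ _, funext fun x => ?_⟩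
    have := congrFun h (σ₁ x)
    simpa using this
  · intro σ _; ext x; simp
  · intro σ _; ext x; simp

lemma exists_perm_comp {α β : Type*} [Fintype α] [DecidableEq α] (ψ₁ ψ₂ : β → α)
    (h₁ : Injective ψ₁) (h₂ : Injective ψ₂) :
    ∃ τ : Equiv.Perm α, ∀ c, τ (ψ₁ c) = ψ₂ c := by
  classical
  let e : {x // x ∈ Set.range ψ₁} ≃ {x // x ∈ Set.range ψ₂} :=
    (Equiv.ofInjective ψ₁ h₁).symm.trans (Equiv.ofInjective ψ₂ h₂)
  refine ⟨e.extendSubtype, fun c => ?_⟩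
  have hmem : ψ₁ c ∈ Set.range ψ₁ := ⟨c, rfl⟩
  rw [e.extendSubtype_apply_of_mem _ hmem]
  show ((Equiv.ofInjective ψ₂ h₂) ((Equiv.ofInjective ψ₁ h₁).symm ⟨ψ₁ c, hmem⟩) : α) = ψ₂ c
  rw [Equiv.ofInjective_symm_apply]
  simp [Equiv.ofInjective]

lemma res_fiber_card {n : ℕ} {C : Finset (Fin n)} (ψ : ↥C → Fin n) (hψ : Injective ψ) :
    (Finset.univ.filter (fun σ : Equiv.Perm (Fin n) => (fun c : ↥C => σ c) = ψ)).card
      = (Finset.univ.filter (fun σ : Equiv.Perm (Fin n) =>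
          (fun c : ↥C => σ c) = (fun c : ↥C => (c : Fin n)))).card := by
  obtain ⟨τ, hτ⟩ := exists_perm_comp (fun c : ↥C => (c : Fin n)) ψ Subtype.val_injective hψ
  refine Finset.card_bij' (fun σ _ => σ.trans τ.symm) (fun σ _ => σ.trans τ) ?_ ?_ ?_ ?_
  · intro σ hσ
    have h := (Finset.mem_filter.mp hσ).2
    refine Finset.mem_filter.mpr ⟨Finset.mem_univ _, funext fun c => ?_⟩
    have := congrFun h c
    simp [this, ← hτ c]
  · intro σ hσ
    have h := (Finset.mem_filter.mp hσ).2
    refine Finset.mem_filter.mpr ⟨Finset.mem_univ _, funext fun c => ?_⟩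
    have := congrFun h c
    simp [this, hτ c]
  · intro σ _; ext x; simp
  · intro σ _; ext x; simp

-- counting injective functions
lemma count_inj (α β : Type*) [Fintype α] [Fintype β] [DecidableEq α] [DecidableEq β] :
    (Finset.univ.filter (fun ψ : α → β => Injective ψ)).card
      = (Fintype.card β).descFactorial (Fintype.card α) := by
  rw [← Fintype.card_subtype]
  rw [Fintype.card_congr (Equiv.subtypeInjectiveEquivEmbedding α β)]
  exact Fintype.card_embedding_eq

def subtypeFstEquiv {α β : Type*} (P : α → Prop) : {p : α × β // P p.1} ≃ {a // P a} × β where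
  toFun p := (⟨p.1.1, p.2⟩, p.1.2)
  invFun x := ⟨(x.1.1, x.2), x.1.2⟩
  left_inv p := rfl
  right_inv x := rfl

lemma count_good {m T s : ℕ} (q : Fin T × Fin s ≃ Fin m) (C : Finset (Fin m)) :
    (Finset.univ.filter (fun ψ : ↥C → Fin m =>
        Injective (fun c => (q.symm (ψ c)).1))).card
      = T.descFactorial C.card * s ^ C.card := by
  rw [← Fintype.card_subtype]
  have e1 : {ψ : ↥C → Fin m // Injective (fun c => (q.symm (ψ c)).1)}
      ≃ {ψ' : ↥C → Fin T × Fin s // Injective (fun c => (ψ' c).1)} :=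
    (Equiv.arrowCongr (Equiv.refl ↥C) q.symm).subtypeEquiv (fun ψ => Iff.rfl)
  have e2 : {ψ' : ↥C → Fin T × Fin s // Injective (fun c => (ψ' c).1)}
      ≃ {p : (↥C → Fin T) × (↥C → Fin s) // Injective p.1} :=
    (Equiv.arrowProdEquivProdArrow ↥C (fun _ => Fin T) (fun _ => Fin s)).subtypeEquiv (fun ψ' => Iff.rfl)
  have e3 := subtypeFstEquiv (β := ↥C → Fin s) (fun χ : ↥C → Fin T => Injective χ)
  rw [Fintype.card_congr ((e1.trans e2).trans e3), Fintype.card_prod, Fintype.card_subtype,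
    count_inj, Fintype.card_fun]
  simp [Fintype.card_coe]

def fstFiberEquiv {α β : Type*} (j : α) : {p : α × β // p.1 = j} ≃ β where
  toFun p := p.1.2
  invFun b := ⟨(j, b), rfl⟩
  left_inv p := by rcases p with ⟨⟨a, b⟩, h⟩; subst h; rfl
  right_inv b := rfl

lemma f0_fiber_card {m T s : ℕ} (q : Fin T × Fin s ≃ Fin m) (j : Fin T) :
    (Finset.univ.filter (fun x : Fin m => (q.symm x).1 = j)).card = s := by
  rw [← Fintype.card_subtype]
  rw [Fintype.card_congr ((q.symm.subtypeEquiv (fun x => Iff.rfl)).trans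
    (fstFiberEquiv j))]
  exact Fintype.card_fin s

-- fibers of f ∘ σ have the same cards as fibers of f
lemma comp_perm_fiber_card {m : ℕ} {β : Type*} [DecidableEq β] (f : Fin m → β)
    (σ : Equiv.Perm (Fin m)) (j : β) :
    (Finset.univ.filter (fun x : Fin m => f (σ x) = j)).card
      = (Finset.univ.filter (fun x : Fin m => f x = j)).card := by
  refine Finset.card_bij' (fun x _ => σ x) (fun x _ => σ.symm x) ?_ ?_ ?_ ?_
  · intro x hx
    exact Finset.mem_filter.mpr ⟨Finset.mem_univ _, (Finset.mem_filter.mp hx).2⟩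
  · intro x hx
    refine Finset.mem_filter.mpr ⟨Finset.mem_univ _, ?_⟩
    have := (Finset.mem_filter.mp hx).2
    simpa using this
  · intro x _; simp
  · intro x _; simp

-- surjectivity onto equipartitions
lemma part_surj {m T s : ℕ} (f₀ f : Fin m → Fin T)
    (hf0 : ∀ j, (Finset.univ.filter (fun x => f₀ x = j)).card = s)
    (hf : ∀ j, (Finset.univ.filter (fun x => f x = j)).card = s) :
    ∃ σ : Equiv.Perm (Fin m), f₀ ∘ σ = f := by
  classical
  have e : ∀ j, {x // f x = j} ≃ {x // f₀ x = j} := fun j =>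
    Fintype.equivOfCardEq (by rw [Fintype.card_subtype, Fintype.card_subtype, hf, hf0])
  refine ⟨(Equiv.sigmaFiberEquiv f).symm.trans
    ((Equiv.sigmaCongrRight e).trans (Equiv.sigmaFiberEquiv f₀)), funext fun x => ?_⟩
  show f₀ ((Equiv.sigmaFiberEquiv f₀) ((Equiv.sigmaCongrRight e)
    ((Equiv.sigmaFiberEquiv f).symm x))) = f x
  have h1 : (Equiv.sigmaFiberEquiv f).symm x = ⟨f x, ⟨x, rfl⟩⟩ := rfl
  rw [h1]
  exact ((e (f x)) ⟨x, rfl⟩).2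

lemma shatter_iff {m T : ℕ} (f : Fin m → Fin T) (C : Finset (Fin m)) :
    (∀ j, (C.filter (fun x => f x = j)).card ≤ 1) ↔ Injective (fun c : ↥C => f c) := by
  constructor
  · intro h c₁ c₂ hcc
    simp only at hcc
    have h1 : (c₁ : Fin m) ∈ C.filter (fun x => f x = f c₂) :=
      Finset.mem_filter.mpr ⟨c₁.2, hcc⟩
    have h2 : (c₂ : Fin m) ∈ C.filter (fun x => f x = f c₂) :=
      Finset.mem_filter.mpr ⟨c₂.2, rfl⟩
    exact Subtype.ext (Finset.card_le_one.mp (h _) _ h1 _ h2)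
  · intro h j
    rw [Finset.card_le_one]
    intro a ha b hb
    obtain ⟨haC, haj⟩ := Finset.mem_filter.mp ha
    obtain ⟨hbC, hbj⟩ := Finset.mem_filter.mp hb
    have : (⟨a, haC⟩ : ↥C) = ⟨b, hbC⟩ := h (by simp only; rw [haj, hbj])
    exact congrArg Subtype.val this

set_option maxHeartbeats 1000000 in
lemma perC (m T s : ℕ) (hT : 1 ≤ T) (hm : m = T * s) (C : Finset (Fin m)) (hC : C.card ≤ T) :
    Real.exp (-(T:ℝ)) *
      ((Finset.univ.filter (fun f : Fin m → Fin T =>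
        ∀ j, (Finset.univ.filter (fun x => f x = j)).card = s)).card : ℝ)
    ≤ (((Finset.univ.filter (fun f : Fin m → Fin T =>
        ∀ j, (Finset.univ.filter (fun x => f x = j)).card = s)).filter
        (fun f => ∀ j, (C.filter (fun x => f x = j)).card ≤ 1)).card : ℝ) := by
  classical
  set k := C.card with hk
  have hq : T * s = m := hm.symm
  set q : Fin T × Fin s ≃ Fin m := finProdFinEquiv.trans (finCongr hq) with hqdef
  set f₀ : Fin m → Fin T := fun x => (q.symm x).1 with hf0def
  set Part := Finset.univ.filter (fun f : Fin m → Fin T =>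
        ∀ j, (Finset.univ.filter (fun x => f x = j)).card = s) with hPartdef
  set A := Part.filter (fun f => ∀ j, (C.filter (fun x => f x = j)).card ≤ 1) with hAdef
  have hf0 : ∀ j, (Finset.univ.filter (fun x => f₀ x = j)).card = s := fun j => f0_fiber_card q j
  have hcomp_mem : ∀ σ : Equiv.Perm (Fin m), f₀ ∘ σ ∈ Part := by
    intro σ
    refine Finset.mem_filter.mpr ⟨Finset.mem_univ _, fun j => ?_⟩
    exact (comp_perm_fiber_card f₀ σ j).trans (hf0 j)
  set K := (Finset.univ.filter (fun σ : Equiv.Perm (Fin m) => f₀ ∘ σ = f₀)).card with hKdef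
  have hK : ∀ f ∈ Part,
      (Finset.univ.filter (fun σ : Equiv.Perm (Fin m) => f₀ ∘ σ = f)).card = K := by
    intro f hf
    obtain ⟨σ₁, hσ₁⟩ := part_surj f₀ f hf0 (fun j => (Finset.mem_filter.mp hf).2 j)
    rw [← hσ₁]
    exact comp_fiber_card f₀ σ₁
  have hKpos : 0 < K := Finset.card_pos.mpr
    ⟨Equiv.refl _, Finset.mem_filter.mpr ⟨Finset.mem_univ _, rfl⟩⟩
  have N2 : Fintype.card (Equiv.Perm (Fin m)) = Part.card * K := by
    have := fiber_count (fun σ : Equiv.Perm (Fin m) => f₀ ∘ σ) Part (fun _ => True)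
      hcomp_mem K hK
    simpa [Finset.filter_true] using this
  have N1 : (Finset.univ.filter (fun σ : Equiv.Perm (Fin m) =>
      ∀ j, (C.filter (fun x => (f₀ ∘ σ) x = j)).card ≤ 1)).card = A.card * K :=
    fiber_count (fun σ : Equiv.Perm (Fin m) => f₀ ∘ σ) Part
      (fun f => ∀ j, (C.filter (fun x => f x = j)).card ≤ 1) hcomp_mem K hK
  -- restriction side
  set L := (Finset.univ.filter (fun σ : Equiv.Perm (Fin m) =>
      (fun c : ↥C => σ c) = (fun c : ↥C => (c : Fin m)))).card with hLdef
  have hL : ∀ ψ ∈ Finset.univ.filter (fun ψ : ↥C → Fin m => Injective ψ),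
      (Finset.univ.filter (fun σ : Equiv.Perm (Fin m) => (fun c : ↥C => σ c) = ψ)).card = L :=
    fun ψ hψ => res_fiber_card ψ (Finset.mem_filter.mp hψ).2
  have hres_mem : ∀ σ : Equiv.Perm (Fin m),
      (fun c : ↥C => σ c) ∈ Finset.univ.filter (fun ψ : ↥C → Fin m => Injective ψ) := by
    intro σ
    refine Finset.mem_filter.mpr ⟨Finset.mem_univ _, fun c₁ c₂ h => ?_⟩
    exact Subtype.ext (σ.injective h)
  have hLpos : 0 < L := Finset.card_pos.mpr
    ⟨Equiv.refl _, Finset.mem_filter.mpr ⟨Finset.mem_univ _, rfl⟩⟩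
  have N4 : Fintype.card (Equiv.Perm (Fin m))
      = (Finset.univ.filter (fun ψ : ↥C → Fin m => Injective ψ)).card * L := by
    have := fiber_count (fun σ : Equiv.Perm (Fin m) => fun c : ↥C => σ c)
      (Finset.univ.filter (fun ψ : ↥C → Fin m => Injective ψ)) (fun _ => True) hres_mem L hL
    simpa [Finset.filter_true] using this
  have N3 : (Finset.univ.filter (fun σ : Equiv.Perm (Fin m) =>
      Injective (fun c : ↥C => (q.symm (σ c)).1))).card
      = ((Finset.univ.filter (fun ψ : ↥C → Fin m => Injective ψ)).filter
          (fun ψ : ↥C → Fin m => Injective (fun c => (q.symm (ψ c)).1))).card * L :=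
    fiber_count (fun σ : Equiv.Perm (Fin m) => fun c : ↥C => σ c)
      (Finset.univ.filter (fun ψ : ↥C → Fin m => Injective ψ))
      (fun ψ : ↥C → Fin m => Injective (fun c => (q.symm (ψ c)).1)) hres_mem L hL
  -- identify the two σ-filters
  have hfilter_eq : (Finset.univ.filter (fun σ : Equiv.Perm (Fin m) =>
      Injective (fun c : ↥C => (q.symm (σ c)).1)))
      = (Finset.univ.filter (fun σ : Equiv.Perm (Fin m) =>
          ∀ j, (C.filter (fun x => (f₀ ∘ σ) x = j)).card ≤ 1)) := by
    refine Finset.filter_congr fun σ _ => ?_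
    exact (shatter_iff (f₀ ∘ σ) C).symm
  have hfilter_eq2 : ((Finset.univ.filter (fun ψ : ↥C → Fin m => Injective ψ)).filter
      (fun ψ : ↥C → Fin m => Injective (fun c => (q.symm (ψ c)).1)))
      = Finset.univ.filter (fun ψ : ↥C → Fin m => Injective (fun c => (q.symm (ψ c)).1)) := by
    rw [Finset.filter_filter]
    refine Finset.filter_congr fun ψ _ => ?_
    constructor
    · exact And.right
    · intro h
      exact ⟨fun a b hab => h (congrArg (fun x => (q.symm x).1) hab), h⟩
  have hGcount : (Finset.univ.filter (fun ψ : ↥C → Fin m =>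
      Injective (fun c => (q.symm (ψ c)).1))).card = T.descFactorial k * s ^ k :=
    count_good q C
  have hIcount : (Finset.univ.filter (fun ψ : ↥C → Fin m => Injective ψ)).card
      = m.descFactorial k := by
    rw [count_inj]
    simp [Fintype.card_coe, hk]
  -- natural number identities
  have e1 : A.card * K = (T.descFactorial k * s ^ k) * L := by
    rw [← N1, ← hfilter_eq, N3, hfilter_eq2, hGcount]
  have e2 : Part.card * K = m.descFactorial k * L := by
    rw [← N2, N4, hIcount]
  -- the analytic bound
  have hs0 : k = 0 ∨ 1 ≤ s := by
    rcases Nat.eq_zero_or_pos s with h | h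
    · left
      have hm0 : m = 0 := by rw [hm, h, Nat.mul_zero]
      have hle := Finset.card_le_univ C
      rw [Fintype.card_fin] at hle
      exact Nat.le_zero.mp (le_trans hle (le_of_eq hm0))
    · right; exact h
  have h8 : Real.exp (-(T:ℝ)) * ((T*s).descFactorial k : ℝ)
      ≤ ((T.descFactorial k : ℝ)) * (s:ℝ)^k := aux_exp_le T s k hT hC hs0
  -- conclude over ℝ
  have e1' : (A.card : ℝ) * K = ((T.descFactorial k : ℝ) * (s:ℝ)^k) * L := by
    exact_mod_cast congrArg (Nat.cast : ℕ → ℝ) e1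
  have e2' : (Part.card : ℝ) * K = ((T*s).descFactorial k : ℝ) * L := by
    rw [← hm]
    exact_mod_cast congrArg (Nat.cast : ℕ → ℝ) e2
  have hKR : (0:ℝ) < K := by exact_mod_cast hKpos
  have hLR : (0:ℝ) ≤ L := Nat.cast_nonneg L
  have key : Real.exp (-(T:ℝ)) * (Part.card : ℝ) * K ≤ (A.card : ℝ) * K := by
    calc Real.exp (-(T:ℝ)) * (Part.card : ℝ) * K
        = Real.exp (-(T:ℝ)) * ((Part.card : ℝ) * K) := by ring
      _ = (Real.exp (-(T:ℝ)) * ((T*s).descFactorial k : ℝ)) * L := by rw [e2']; ring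
      _ ≤ (((T.descFactorial k : ℝ)) * (s:ℝ)^k) * L := mul_le_mul_of_nonneg_right h8 hLR
      _ = (A.card : ℝ) * K := e1'.symm
  exact le_of_mul_le_mul_right key hKR

set_option maxHeartbeats 1000000

/-- For a polynomial `P` consisting of `μ = 𝒞.card` distinct multilinear monomials of degree
at most `T` (monomials indexed by their variable sets `C ∈ 𝒞`), a uniformly random
equipartition of `[m]` into `T` parts (encoded as a function `f : Fin m → Fin T` with all
fibers of size `m/T`) shatters at least `0.5·μ·e^{-T}` of the monomials with probability at
least `e^{-2T}`. -/
theorem stmt_9 (m T : ℕ) (hT : 1 ≤ T) (hdvd : T ∣ m)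
    (𝒞 : Finset (Finset (Fin m))) (hdeg : ∀ C ∈ 𝒞, C.card ≤ T) :
    let Part : Finset (Fin m → Fin T) := Finset.univ.filter (fun f =>
      ∀ j, (Finset.univ.filter (fun x => f x = j)).card = m / T)
    ((Part.filter (fun f =>
        (0.5 : ℝ) * 𝒞.card * Real.exp (-(T : ℝ)) ≤
          ((𝒞.filter (fun C => ∀ j, (C.filter (fun x => f x = j)).card ≤ 1)).card : ℝ))).card : ℝ)
      / Part.card ≥ Real.exp (-2 * (T : ℝ)) := by
  intro Part
  classical
  have hm : m = T * (m / T) := (Nat.mul_div_cancel' hdvd).symm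
  set s := m / T with hsdef
  have hPart : Part = Finset.univ.filter (fun f : Fin m → Fin T =>
      ∀ j, (Finset.univ.filter (fun x => f x = j)).card = s) := rfl
  have hq : T * s = m := hm.symm
  have hPartpos : 0 < Part.card := by
    refine Finset.card_pos.mpr
      ⟨(fun x => ((finProdFinEquiv.trans (finCongr hq)).symm x).1), ?_⟩
    rw [hPart]
    exact Finset.mem_filter.mpr ⟨Finset.mem_univ _, fun j => f0_fiber_card _ j⟩
  have hP0 : (0:ℝ) < Part.card := by exact_mod_cast hPartpos
  have hexp1 : Real.exp (-(T:ℝ)) ≤ 1 := by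
    rw [← Real.exp_zero]
    apply Real.exp_le_exp.mpr
    simp
  have hhalf : Real.exp (-2 * (T:ℝ)) ≤ 0.5 * Real.exp (-(T:ℝ)) := by
    have hT1 : (1:ℝ) ≤ T := by exact_mod_cast hT
    have h1 : Real.exp (-(T:ℝ)) ≤ 0.5 := by
      have e1 : Real.exp (-(T:ℝ)) ≤ Real.exp (-1) := Real.exp_le_exp.mpr (by linarith)
      have h2 : (2:ℝ) ≤ Real.exp 1 := by
        have := Real.exp_one_gt_d9
        linarith
      have e2 : Real.exp (-1 : ℝ) ≤ 0.5 := by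
        rw [Real.exp_neg]
        have h3 := inv_anti₀ (by norm_num : (0:ℝ) < 2) h2
        have h4 : ((2:ℝ))⁻¹ = 0.5 := by norm_num
        linarith [h3, h4.le]
      linarith
    have h5 : Real.exp (-2 * (T:ℝ)) = Real.exp (-(T:ℝ)) * Real.exp (-(T:ℝ)) := by
      rw [← Real.exp_add]; ring_nf
    rw [h5]
    nlinarith [Real.exp_pos (-(T:ℝ))]
  set A := Part.filter (fun f =>
        (0.5 : ℝ) * 𝒞.card * Real.exp (-(T : ℝ)) ≤
          ((𝒞.filter (fun C => ∀ j, (C.filter (fun x => f x = j)).card ≤ 1)).card : ℝ)) with hAdef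
  suffices hA : 0.5 * Real.exp (-(T:ℝ)) * (Part.card:ℝ) ≤ (A.card : ℝ) by
    rw [ge_iff_le, le_div_iff₀ hP0]
    calc Real.exp (-2*(T:ℝ)) * Part.card ≤ (0.5 * Real.exp (-(T:ℝ))) * Part.card :=
        mul_le_mul_of_nonneg_right hhalf (le_of_lt hP0)
      _ ≤ A.card := hA
  by_cases hμ : 𝒞.card = 0
  · have hAP : A = Part := by
      rw [hAdef]
      apply Finset.filter_true_of_mem
      intro f _
      rw [hμ]
      simp
    rw [hAP]
    nlinarith [hP0, Real.exp_pos (-(T:ℝ)), hexp1]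
  · have hμ1 : 1 ≤ 𝒞.card := Nat.one_le_iff_ne_zero.mpr hμ
    have hμR : (1:ℝ) ≤ (𝒞.card:ℝ) := by exact_mod_cast hμ1
    have hsum : ∑ f ∈ Part, (𝒞.filter (fun C => ∀ j, (C.filter (fun x => f x = j)).card ≤ 1)).card
        = ∑ C ∈ 𝒞, (Part.filter (fun f => ∀ j, (C.filter (fun x => f x = j)).card ≤ 1)).card := by
      simp_rw [Finset.card_filter]
      exact Finset.sum_comm
    have hlow : (𝒞.card : ℝ) * (Real.exp (-(T:ℝ)) * (Part.card:ℝ))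
        ≤ ∑ f ∈ Part, ((𝒞.filter (fun C => ∀ j, (C.filter (fun x => f x = j)).card ≤ 1)).card : ℝ) := by
      have hstep : ∀ C ∈ 𝒞, Real.exp (-(T:ℝ)) * (Part.card:ℝ)
          ≤ ((Part.filter (fun f => ∀ j, (C.filter (fun x => f x = j)).card ≤ 1)).card : ℝ) := by
        intro C hC
        rw [hPart]
        exact perC m T s hT hm C (hdeg C hC)
      calc (𝒞.card : ℝ) * (Real.exp (-(T:ℝ)) * (Part.card:ℝ))
          = ∑ _C ∈ 𝒞, Real.exp (-(T:ℝ)) * (Part.card:ℝ) := by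
            rw [Finset.sum_const, nsmul_eq_mul]
        _ ≤ ∑ C ∈ 𝒞, ((Part.filter (fun f => ∀ j, (C.filter (fun x => f x = j)).card ≤ 1)).card : ℝ) :=
            Finset.sum_le_sum hstep
        _ = ((∑ C ∈ 𝒞, (Part.filter (fun f => ∀ j, (C.filter (fun x => f x = j)).card ≤ 1)).card : ℕ) : ℝ) := by
            push_cast; rfl
        _ = ((∑ f ∈ Part, (𝒞.filter (fun C => ∀ j, (C.filter (fun x => f x = j)).card ≤ 1)).card : ℕ) : ℝ) := by
            rw [hsum]
        _ = ∑ f ∈ Part, ((𝒞.filter (fun C => ∀ j, (C.filter (fun x => f x = j)).card ≤ 1)).card : ℝ) := by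
            push_cast; rfl
    have hup : ∑ f ∈ Part, ((𝒞.filter (fun C => ∀ j, (C.filter (fun x => f x = j)).card ≤ 1)).card : ℝ)
        ≤ (A.card : ℝ) * (𝒞.card:ℝ)
          + (Part.card : ℝ) * (0.5 * (𝒞.card:ℝ) * Real.exp (-(T:ℝ))) := by
      rw [← Finset.sum_filter_add_sum_filter_not Part (fun f =>
        (0.5 : ℝ) * 𝒞.card * Real.exp (-(T : ℝ)) ≤
          ((𝒞.filter (fun C => ∀ j, (C.filter (fun x => f x = j)).card ≤ 1)).card : ℝ))]
      have hpart1 : ∑ f ∈ A, ((𝒞.filter (fun C => ∀ j, (C.filter (fun x => f x = j)).card ≤ 1)).card : ℝ)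
          ≤ (A.card : ℝ) * (𝒞.card:ℝ) := by
        rw [← nsmul_eq_mul]
        apply Finset.sum_le_card_nsmul
        intro f _
        exact_mod_cast Finset.card_filter_le 𝒞 _
      have hpart2 : ∑ f ∈ Part.filter (fun f => ¬ ((0.5 : ℝ) * 𝒞.card * Real.exp (-(T : ℝ)) ≤
            ((𝒞.filter (fun C => ∀ j, (C.filter (fun x => f x = j)).card ≤ 1)).card : ℝ))),
            ((𝒞.filter (fun C => ∀ j, (C.filter (fun x => f x = j)).card ≤ 1)).card : ℝ)
          ≤ (Part.card : ℝ) * (0.5 * (𝒞.card:ℝ) * Real.exp (-(T:ℝ))) := by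
        have hb : ∀ f ∈ Part.filter (fun f => ¬ ((0.5 : ℝ) * 𝒞.card * Real.exp (-(T : ℝ)) ≤
            ((𝒞.filter (fun C => ∀ j, (C.filter (fun x => f x = j)).card ≤ 1)).card : ℝ))),
            ((𝒞.filter (fun C => ∀ j, (C.filter (fun x => f x = j)).card ≤ 1)).card : ℝ)
              ≤ 0.5 * (𝒞.card:ℝ) * Real.exp (-(T:ℝ)) := by
          intro f hf
          exact (not_le.mp (Finset.mem_filter.mp hf).2).le
        calc _ ≤ ((Part.filter (fun f => ¬ ((0.5 : ℝ) * 𝒞.card * Real.exp (-(T : ℝ)) ≤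
            ((𝒞.filter (fun C => ∀ j, (C.filter (fun x => f x = j)).card ≤ 1)).card : ℝ)))).card : ℝ)
              * (0.5 * (𝒞.card:ℝ) * Real.exp (-(T:ℝ))) := by
              rw [← nsmul_eq_mul]
              exact Finset.sum_le_card_nsmul _ _ _ hb
          _ ≤ (Part.card : ℝ) * (0.5 * (𝒞.card:ℝ) * Real.exp (-(T:ℝ))) := by
              have hcard : ((Part.filter (fun f => ¬ ((0.5 : ℝ) * 𝒞.card * Real.exp (-(T : ℝ)) ≤
                ((𝒞.filter (fun C => ∀ j, (C.filter (fun x => f x = j)).card ≤ 1)).card : ℝ)))).card : ℝ)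
                  ≤ (Part.card : ℝ) := by
                exact_mod_cast Finset.card_filter_le Part _
              have hnn : (0:ℝ) ≤ 0.5 * (𝒞.card:ℝ) * Real.exp (-(T:ℝ)) :=
                  mul_nonneg (mul_nonneg (by norm_num) (Nat.cast_nonneg _)) (Real.exp_pos _).le
              exact mul_le_mul_of_nonneg_right hcard hnn
      exact add_le_add hpart1 hpart2
    have hfin : (𝒞.card:ℝ) * (0.5 * Real.exp (-(T:ℝ)) * (Part.card:ℝ))
        ≤ (𝒞.card:ℝ) * (A.card : ℝ) := by nlinarith [hlow, hup]
    exact le_of_mul_le_mul_left hfin (by linarith)
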